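/- arXiv:2312.07703 — 2 statements merged into one kernel-verified Lean document; each statement's English description precedes it below -/
import Mathlib

section
/- With C₀ = 1/(β₁e^{β₁a₀} − β₂e^{β₂a₀}) and β₁²e^{β₁a₀} = β₂²e^{β₂a₀}, one has C₀ = β₂/(β₁(β₂ − β₁))·e^{−β₁a₀}, and consequently φ(ℓ) = v₀'(a₀ − ℓ) for ℓ ∈ [0, a₀], where v₀'(x) = C₀(β₁e^{β₁x} − β₂e^{β₂x}) and φ(ℓ) = (β₁e^{β₁ℓ} − β₂e^{β₂ℓ})e^{−(β₁+β₂)ℓ}/(β₁ − β₂). -/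
/-- With C₀ = 1/(β₁e^{β₁a₀} − β₂e^{β₂a₀}) and β₁²e^{β₁a₀} = β₂²e^{β₂a₀}, one has
C₀ = β₂/(β₁(β₂ − β₁))·e^{−β₁a₀}, and hence φ(ℓ) = v₀'(a₀ − ℓ) for ℓ ∈ [0,a₀],
where v₀'(x) = C₀(β₁e^{β₁x} − β₂e^{β₂x}). -/
theorem C0_and_phi_eq (β₁ β₂ a₀ : ℝ) (hβ₁ : 0 < β₁) (hβ₂ : β₂ < 0) (ha : 0 < a₀)
    (hsp : β₁ ^ 2 * Real.exp (β₁ * a₀) = β₂ ^ 2 * Real.exp (β₂ * a₀)) :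
    (β₁ * Real.exp (β₁ * a₀) - β₂ * Real.exp (β₂ * a₀))⁻¹ =
        β₂ / (β₁ * (β₂ - β₁)) * Real.exp (-β₁ * a₀) ∧
    ∀ ℓ : ℝ, 0 ≤ ℓ → ℓ ≤ a₀ →
      (β₁ * Real.exp (β₁ * ℓ) - β₂ * Real.exp (β₂ * ℓ)) *
          Real.exp (-(β₁ + β₂) * ℓ) / (β₁ - β₂) =
        (β₁ * Real.exp (β₁ * a₀) - β₂ * Real.exp (β₂ * a₀))⁻¹ *
          (β₁ * Real.exp (β₁ * (a₀ - ℓ)) - β₂ * Real.exp (β₂ * (a₀ - ℓ))) := by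
  have hE1 := Real.exp_pos (β₁ * a₀)
  have hE2 := Real.exp_pos (β₂ * a₀)
  have hb1 : β₁ ≠ 0 := ne_of_gt hβ₁
  have hb2 : β₂ ≠ 0 := ne_of_lt hβ₂
  have hdiff : β₂ - β₁ ≠ 0 := ne_of_lt (by linarith)
  have hdiff' : β₁ - β₂ ≠ 0 := ne_of_gt (by linarith)
  have hDpos : 0 < β₁ * Real.exp (β₁ * a₀) - β₂ * Real.exp (β₂ * a₀) := by nlinarith
  have hD : β₁ * Real.exp (β₁ * a₀) - β₂ * Real.exp (β₂ * a₀) ≠ 0 := ne_of_gt hDpos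
  constructor
  · rw [neg_mul, Real.exp_neg]
    generalize Real.exp (β₁ * a₀) = E1 at *
    generalize Real.exp (β₂ * a₀) = E2 at *
    field_simp
    linear_combination -hsp
  · intro ℓ _ _
    have h1 : Real.exp (β₁ * (a₀ - ℓ)) = Real.exp (β₁ * a₀) / Real.exp (β₁ * ℓ) := by
      rw [mul_sub, Real.exp_sub]
    have h2 : Real.exp (β₂ * (a₀ - ℓ)) = Real.exp (β₂ * a₀) / Real.exp (β₂ * ℓ) := by
      rw [mul_sub, Real.exp_sub]
    have h3 : Real.exp (-(β₁ + β₂) * ℓ) = 1 / (Real.exp (β₁ * ℓ) * Real.exp (β₂ * ℓ)) := by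
      rw [← Real.exp_add, neg_mul, Real.exp_neg]
      ring_nf
    have he1 := (Real.exp_pos (β₁ * ℓ)).ne'
    have he2 := (Real.exp_pos (β₂ * ℓ)).ne'
    rw [h1, h2, h3]
    generalize Real.exp (β₁ * ℓ) = F1 at *
    generalize Real.exp (β₂ * ℓ) = F2 at *
    generalize Real.exp (β₁ * a₀) = E1 at *
    generalize Real.exp (β₂ * a₀) = E2 at *
    field_simp
    linear_combination (F1 - F2) * hsp
end

section
/- Suppose A, B : [−a₀, 0] → ℝ satisfy A(z)e^{−β₁z} + B(z)e^{−β₂z} = 0 and A'(z)e^{β₁a₀} + B'(z)e^{β₂a₀} = A(z)β₁e^{β₁a₀} + B(z)β₂e^{β₂a₀} for all z, with A, B differentiable. Then A'(z) = β₁A(z) for all z ∈ [−a₀, 0], hence A(z) = A(0)e^{β₁z} and B(z) = −A(0)e^{β₂z}. -/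
open Set Filter Topology

lemma deriv_eq_zero_of_eqOn_zero {f : ℝ → ℝ} {a b x : ℝ} (hab : a < b)
    (hf : DifferentiableAt ℝ f x) (hx : x ∈ Icc a b)
    (h0 : ∀ y ∈ Icc a b, f y = 0) : deriv f x = 0 := by
  have hu := (uniqueDiffOn_Icc hab) x hx
  rw [← hf.derivWithin hu, derivWithin_congr (fun y hy => h0 y hy) (h0 x hx)]
  exact congrFun (derivWithin_const (Icc a b) (0:ℝ)) x

/-- If differentiable A, B satisfy A(z)e^{−β₁z} + B(z)e^{−β₂z} = 0 and
A'(z)e^{β₁a₀} + B'(z)e^{β₂a₀} = A(z)β₁e^{β₁a₀} + B(z)β₂e^{β₂a₀} on [−a₀,0],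
then A'(z) = β₁A(z) on [−a₀,0], hence A(z) = A(0)e^{β₁z} and
B(z) = −A(0)e^{β₂z}. -/
theorem AB_explicit (β₁ β₂ a₀ : ℝ) (A B : ℝ → ℝ) (hβ₁ : 0 < β₁) (hβ₂ : β₂ < 0)
    (ha : 0 < a₀) (hA : Differentiable ℝ A) (hB : Differentiable ℝ B)
    (h0 : ∀ z ∈ Icc (-a₀) 0,
      A z * Real.exp (-β₁ * z) + B z * Real.exp (-β₂ * z) = 0)
    (hrefl : ∀ z ∈ Icc (-a₀) 0,
      deriv A z * Real.exp (β₁ * a₀) + deriv B z * Real.exp (β₂ * a₀) =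
        A z * β₁ * Real.exp (β₁ * a₀) + B z * β₂ * Real.exp (β₂ * a₀)) :
    ∀ z ∈ Icc (-a₀) 0,
      deriv A z = β₁ * A z ∧
      A z = A 0 * Real.exp (β₁ * z) ∧ B z = -A 0 * Real.exp (β₂ * z) := by
  have ha0 : (-a₀ : ℝ) < 0 := neg_lt_zero.mpr ha
  have hexp1 : ∀ x : ℝ, HasDerivAt (fun t => Real.exp (-β₁ * t))
      (Real.exp (-β₁ * x) * (-β₁)) x := fun x => by simpa using ((hasDerivAt_id x).const_mul (-β₁)).exp
  have hexp2 : ∀ x : ℝ, HasDerivAt (fun t => Real.exp (-β₂ * t))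
      (Real.exp (-β₂ * x) * (-β₂)) x := fun x => by simpa using ((hasDerivAt_id x).const_mul (-β₂)).exp
  -- derivative of the identically-zero combination
  have hderivF : ∀ w ∈ Icc (-a₀) 0,
      deriv A w * Real.exp (-β₁ * w) + A w * (Real.exp (-β₁ * w) * (-β₁)) +
        (deriv B w * Real.exp (-β₂ * w) + B w * (Real.exp (-β₂ * w) * (-β₂))) = 0 := by
    intro w hw
    have hF : HasDerivAt (fun t => A t * Real.exp (-β₁ * t) + B t * Real.exp (-β₂ * t))
        (deriv A w * Real.exp (-β₁ * w) + A w * (Real.exp (-β₁ * w) * (-β₁)) +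
          (deriv B w * Real.exp (-β₂ * w) + B w * (Real.exp (-β₂ * w) * (-β₂)))) w :=
      (((hA w).hasDerivAt.mul (hexp1 w)).add ((hB w).hasDerivAt.mul (hexp2 w)))
    rw [← hF.deriv]
    exact deriv_eq_zero_of_eqOn_zero ha0
      (((hA w).mul (by fun_prop)).add ((hB w).mul (by fun_prop))) hw h0
  -- deriv A = β₁ A on the half-open interval
  have hu : ∀ w ∈ Ioc (-a₀) 0, deriv A w = β₁ * A w := by
    intro w hw
    have hw' : w ∈ Icc (-a₀) 0 := Ioc_subset_Icc_self hw
    have eq1 := hderivF w hw'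
    have eq2 := hrefl w hw'
    have hlt : Real.exp (-β₁ * w + β₂ * a₀) < Real.exp (β₁ * a₀ + -β₂ * w) :=
      Real.exp_lt_exp.mpr (by nlinarith [hw.1, hw.2])
    have hne : Real.exp (β₁ * a₀) * Real.exp (-β₂ * w) -
        Real.exp (-β₁ * w) * Real.exp (β₂ * a₀) ≠ 0 := by
      rw [← Real.exp_add, ← Real.exp_add]
      exact sub_ne_zero.mpr (ne_of_gt hlt)
    have key : (deriv A w - β₁ * A w) *
        (Real.exp (β₁ * a₀) * Real.exp (-β₂ * w) -
          Real.exp (-β₁ * w) * Real.exp (β₂ * a₀)) = 0 := by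
      linear_combination Real.exp (-β₂ * w) * eq2 - Real.exp (β₂ * a₀) * eq1
    rcases mul_eq_zero.mp key with h | h
    · linarith
    · exact absurd h hne
  -- g = A * exp(-β₁ ·) is constant
  have hgdiff : Differentiable ℝ (fun t => A t * Real.exp (-β₁ * t)) :=
    hA.mul (by fun_prop)
  have hgderiv : ∀ w ∈ Ioc (-a₀) 0,
      deriv (fun t => A t * Real.exp (-β₁ * t)) w = 0 := by
    intro w hw
    have hF : HasDerivAt (fun t => A t * Real.exp (-β₁ * t))
        (deriv A w * Real.exp (-β₁ * w) + A w * (Real.exp (-β₁ * w) * (-β₁))) w :=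
      (hA w).hasDerivAt.mul (hexp1 w)
    rw [hF.deriv, hu w hw]; ring
  have hgconst : ∀ w ∈ Ioc (-a₀) 0,
      A w * Real.exp (-β₁ * w) = A 0 * Real.exp (-β₁ * 0) := by
    intro w hw
    rcases eq_or_lt_of_le hw.2 with h | h
    · rw [h]
    · have := constant_of_derivWithin_zero (f := fun t => A t * Real.exp (-β₁ * t))
        (a := w) (b := 0) hgdiff.differentiableOn ?_ 0 (right_mem_Icc.mpr h.le)
      · exact this.symm
      · intro x hx
        have hx' : x ∈ Icc w 0 := Ico_subset_Icc_self hx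
        rw [(hgdiff x).derivWithin ((uniqueDiffOn_Icc h) x hx')]
        exact hgderiv x ⟨lt_of_lt_of_le hw.1 hx.1, hx.2.le⟩
  have hgconst' : ∀ w ∈ Icc (-a₀) 0, A w * Real.exp (-β₁ * w) = A 0 := by
    have h0' : A 0 * Real.exp (-β₁ * 0) = A 0 := by simp
    intro w hw
    rcases eq_or_lt_of_le hw.1 with h | h
    · -- endpoint by continuity
      subst h
      have hNB : (𝓝[Ioc (-a₀) 0] (-a₀)).NeBot := by
        rw [← mem_closure_iff_nhdsWithin_neBot, closure_Ioc (ne_of_lt ha0)]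
        exact left_mem_Icc.mpr ha0.le
      have t1 : Tendsto (fun t => A t * Real.exp (-β₁ * t)) (𝓝[Ioc (-a₀) 0] (-a₀))
          (𝓝 (A (-a₀) * Real.exp (-β₁ * (-a₀)))) :=
        (hgdiff.continuous.continuousAt).continuousWithinAt.tendsto
      have t2 : Tendsto (fun t => A t * Real.exp (-β₁ * t)) (𝓝[Ioc (-a₀) 0] (-a₀))
          (𝓝 (A 0)) := by
        refine Tendsto.congr' ?_ tendsto_const_nhds
        filter_upwards [self_mem_nhdsWithin] with x hx
        rw [hgconst x hx, h0']
      exact tendsto_nhds_unique t1 t2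
    · rw [hgconst w ⟨h, hw.2⟩, h0']
  have hAeq : ∀ w ∈ Icc (-a₀) 0, A w = A 0 * Real.exp (β₁ * w) := by
    intro w hw
    have h := hgconst' w hw
    have : A w * Real.exp (-β₁ * w) * Real.exp (β₁ * w) = A 0 * Real.exp (β₁ * w) := by
      rw [h]
    rwa [mul_assoc, ← Real.exp_add, show -β₁ * w + β₁ * w = 0 by ring, Real.exp_zero,
      mul_one] at this
  have hBeq : ∀ w ∈ Icc (-a₀) 0, B w = -A 0 * Real.exp (β₂ * w) := by
    intro w hw
    have h1 := h0 w hw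
    have h2 := hgconst' w hw
    have : B w * Real.exp (-β₂ * w) * Real.exp (β₂ * w) =
        -A 0 * Real.exp (β₂ * w) := by
      have : B w * Real.exp (-β₂ * w) = -A 0 := by linarith
      rw [this]
    rwa [mul_assoc, ← Real.exp_add, show -β₂ * w + β₂ * w = 0 by ring, Real.exp_zero,
      mul_one] at this
  have hAderiv : ∀ w ∈ Icc (-a₀) 0, deriv A w = β₁ * A w := by
    intro w hw
    have hexp : ∀ x : ℝ, HasDerivAt (fun t => A 0 * Real.exp (β₁ * t))
        (A 0 * (Real.exp (β₁ * x) * β₁)) x :=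
      fun x => by simpa using (((hasDerivAt_id x).const_mul β₁).exp).const_mul (A 0)
    have hdiff : Differentiable ℝ (fun t => A t - A 0 * Real.exp (β₁ * t)) :=
      hA.sub (fun x => (hexp x).differentiableAt)
    have hz : deriv (fun t => A t - A 0 * Real.exp (β₁ * t)) w = 0 :=
      deriv_eq_zero_of_eqOn_zero ha0 (hdiff w) hw
        (fun y hy => by rw [hAeq y hy]; ring)
    have hF : HasDerivAt (fun t => A t - A 0 * Real.exp (β₁ * t))
        (deriv A w - A 0 * (Real.exp (β₁ * w) * β₁)) w :=
      (hA w).hasDerivAt.sub (hexp w)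
    rw [hF.deriv] at hz
    rw [hAeq w hw]
    linarith
  intro z hz
  exact ⟨hAderiv z hz, hAeq z hz, hBeq z hz⟩
end
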